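/- arXiv:2203.05686 — 4 statements merged into one kernel-verified Lean document; each statement's English description precedes it below -/
import Mathlib

section
/- With the data of the mean-field operator setup (finite type set Φ, matrices H(φ), G(φ), Q(φ) with ‖H(φ)‖ < 1 for all φ, probability weights P, initial means ν(φ)), for every bounded sequence X̄ : ℕ → ℝⁿ the inner series ∑_{s=j+1}^{∞} (H(φ)ᵀ)^{s-j-1} Q(φ) X̄_s converges for every j and φ, and the sequence T(X̄) is bounded: sup_k ‖T(X̄)(k)‖ ≤ ∑_{φ∈Φ} ( ‖ν(φ)‖ + ‖G(φ)‖‖Q(φ)‖ (sup_j ‖X̄_j‖) / (1-‖H(φ)‖)² ) P(φ) < ∞. In particular, T maps the space of bounded ℝⁿ-valued sequences into itself. -/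
lemma pow_apply_norm_le {n : ℕ} (A : EuclideanSpace ℝ (Fin n) →L[ℝ] EuclideanSpace ℝ (Fin n))
    (m : ℕ) (x : EuclideanSpace ℝ (Fin n)) : ‖(A ^ m) x‖ ≤ ‖A‖ ^ m * ‖x‖ := by
  induction m with
  | zero =>
      simp only [pow_zero, ContinuousLinearMap.one_apply, one_mul]
      exact le_rfl
  | succ m ih =>
      rw [pow_succ']
      calc ‖(A * A ^ m) x‖ = ‖A ((A ^ m) x)‖ := rfl
        _ ≤ ‖A‖ * ‖(A ^ m) x‖ := A.le_opNorm _
        _ ≤ ‖A‖ * (‖A‖ ^ m * ‖x‖) := by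
            exact mul_le_mul_of_nonneg_left ih (norm_nonneg _)
        _ = ‖A‖ ^ (m + 1) * ‖x‖ := by ring

/-- The aggregate trajectory of agents of type `φ`:
`X̂_k(φ; X̄) = H(φ)^k ν(φ) + ∑_{j=0}^{k-1} H(φ)^{k-1-j} G(φ) ∑_{s=j+1}^∞ (H(φ)ᵀ)^{s-j-1} Q(φ) X̄_s`
(the inner series reindexed via `s = j + 1 + m`). Matrices are modeled as continuous
linear maps on Euclidean space; transpose is the adjoint. -/
noncomputable def XhatMF {n : ℕ} {Φ : Type*}
    (H G Q : Φ → (EuclideanSpace ℝ (Fin n) →L[ℝ] EuclideanSpace ℝ (Fin n)))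
    (ν : Φ → EuclideanSpace ℝ (Fin n)) (X : ℕ → EuclideanSpace ℝ (Fin n))
    (φ : Φ) (k : ℕ) : EuclideanSpace ℝ (Fin n) :=
  ((H φ) ^ k) (ν φ) +
    ∑ j ∈ Finset.range k, ((H φ) ^ (k - 1 - j))
      ((G φ) (∑' m : ℕ, ((ContinuousLinearMap.adjoint (H φ)) ^ m) ((Q φ) (X (j + 1 + m)))))

/-- The mean-field consistency operator `T(X̄)(k) = ∑_{φ ∈ Φ} X̂_k(φ; X̄) P(φ)`. -/
noncomputable def TMF {n : ℕ} {Φ : Type*} [Fintype Φ]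
    (H G Q : Φ → (EuclideanSpace ℝ (Fin n) →L[ℝ] EuclideanSpace ℝ (Fin n)))
    (P : Φ → ℝ) (ν : Φ → EuclideanSpace ℝ (Fin n)) (X : ℕ → EuclideanSpace ℝ (Fin n))
    (k : ℕ) : EuclideanSpace ℝ (Fin n) :=
  ∑ φ, P φ • XhatMF H G Q ν X φ k

/-- In the mean-field operator setup, for every bounded sequence `X̄`
(with bound `C`), the inner series converges for every `j` and `φ`, and
`‖T(X̄)(k)‖ ≤ ∑_φ (‖ν(φ)‖ + ‖G(φ)‖‖Q(φ)‖ C / (1-‖H(φ)‖)²) P(φ)` for all `k`;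
in particular `T` maps bounded sequences to bounded sequences. -/
theorem stmt3 {n : ℕ} {Φ : Type*} [Fintype Φ] [Nonempty Φ]
    (H G Q : Φ → (EuclideanSpace ℝ (Fin n) →L[ℝ] EuclideanSpace ℝ (Fin n)))
    (hH : ∀ φ, ‖H φ‖ < 1)
    (P : Φ → ℝ) (hP : ∀ φ, 0 ≤ P φ) (hPsum : ∑ φ, P φ = 1)
    (ν : Φ → EuclideanSpace ℝ (Fin n))
    (X : ℕ → EuclideanSpace ℝ (Fin n)) (C : ℝ) (hX : ∀ k, ‖X k‖ ≤ C) :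
    (∀ (φ : Φ) (j : ℕ), Summable fun m : ℕ =>
        ((ContinuousLinearMap.adjoint (H φ)) ^ m) ((Q φ) (X (j + 1 + m)))) ∧
    (∀ k, ‖TMF H G Q P ν X k‖
        ≤ ∑ φ, (‖ν φ‖ + ‖G φ‖ * ‖Q φ‖ * C / (1 - ‖H φ‖) ^ 2) * P φ) := by

  have hC : 0 ≤ C := (norm_nonneg _).trans (hX 0)
  have hH0 : ∀ φ, (0:ℝ) ≤ ‖H φ‖ := fun φ => norm_nonneg _
  have h1H : ∀ φ, (0:ℝ) < 1 - ‖H φ‖ := fun φ => by linarith [hH φ]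
  -- adjoint norm
  have hadj : ∀ φ, ‖ContinuousLinearMap.adjoint (H φ)‖ = ‖H φ‖ := fun φ =>
    LinearIsometryEquiv.norm_map ContinuousLinearMap.adjoint (H φ)
  have hterm : ∀ (φ : Φ) (j m : ℕ),
      ‖((ContinuousLinearMap.adjoint (H φ)) ^ m) ((Q φ) (X (j + 1 + m)))‖
        ≤ ‖H φ‖ ^ m * (‖Q φ‖ * C) := by
    intro φ j m
    calc ‖((ContinuousLinearMap.adjoint (H φ)) ^ m) ((Q φ) (X (j + 1 + m)))‖
        ≤ ‖ContinuousLinearMap.adjoint (H φ)‖ ^ m * ‖(Q φ) (X (j + 1 + m))‖ :=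
          pow_apply_norm_le _ _ _
      _ ≤ ‖H φ‖ ^ m * (‖Q φ‖ * C) := by
          rw [hadj]
          refine mul_le_mul_of_nonneg_left ?_ (pow_nonneg (hH0 φ) m)
          exact ((Q φ).le_opNorm _).trans
            (mul_le_mul_of_nonneg_left (hX _) (norm_nonneg _))
  have hgeom : ∀ φ, Summable fun m : ℕ => ‖H φ‖ ^ m * (‖Q φ‖ * C) := fun φ =>
    (summable_geometric_of_lt_one (hH0 φ) (hH φ)).mul_right _
  have hsum : ∀ (φ : Φ) (j : ℕ), Summable fun m : ℕ =>
      ((ContinuousLinearMap.adjoint (H φ)) ^ m) ((Q φ) (X (j + 1 + m))) := by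
    intro φ j
    exact Summable.of_norm <| Summable.of_nonneg_of_le
      (fun m => norm_nonneg _) (hterm φ j) (hgeom φ)
  refine ⟨hsum, fun k => ?_⟩
  have hinner : ∀ (φ : Φ) (j : ℕ),
      ‖∑' m : ℕ, ((ContinuousLinearMap.adjoint (H φ)) ^ m) ((Q φ) (X (j + 1 + m)))‖
        ≤ (1 - ‖H φ‖)⁻¹ * (‖Q φ‖ * C) := by
    intro φ j
    exact tsum_of_norm_bounded
      ((hasSum_geometric_of_lt_one (hH0 φ) (hH φ)).mul_right _) (hterm φ j)
  have hxhat : ∀ φ, ‖XhatMF H G Q ν X φ k‖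
      ≤ ‖ν φ‖ + ‖G φ‖ * ‖Q φ‖ * C / (1 - ‖H φ‖) ^ 2 := by
    intro φ
    have hpow : ‖((H φ) ^ k) (ν φ)‖ ≤ ‖ν φ‖ := by
      calc ‖((H φ) ^ k) (ν φ)‖ ≤ ‖H φ‖ ^ k * ‖ν φ‖ := pow_apply_norm_le _ _ _
        _ ≤ 1 * ‖ν φ‖ := mul_le_mul_of_nonneg_right
            (pow_le_one₀ (hH0 φ) (hH φ).le) (norm_nonneg _)
        _ = ‖ν φ‖ := one_mul _
    have hsumj : ‖∑ j ∈ Finset.range k, ((H φ) ^ (k - 1 - j))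
          ((G φ) (∑' m : ℕ, ((ContinuousLinearMap.adjoint (H φ)) ^ m)
            ((Q φ) (X (j + 1 + m)))))‖
        ≤ (1 - ‖H φ‖)⁻¹ * (‖G φ‖ * ((1 - ‖H φ‖)⁻¹ * (‖Q φ‖ * C))) := by
      calc ‖∑ j ∈ Finset.range k, ((H φ) ^ (k - 1 - j))
              ((G φ) (∑' m : ℕ, ((ContinuousLinearMap.adjoint (H φ)) ^ m)
                ((Q φ) (X (j + 1 + m)))))‖
          ≤ ∑ j ∈ Finset.range k, ‖((H φ) ^ (k - 1 - j))
              ((G φ) (∑' m : ℕ, ((ContinuousLinearMap.adjoint (H φ)) ^ m)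
                ((Q φ) (X (j + 1 + m)))))‖ := norm_sum_le _ _
        _ ≤ ∑ j ∈ Finset.range k,
              ‖H φ‖ ^ (k - 1 - j) * (‖G φ‖ * ((1 - ‖H φ‖)⁻¹ * (‖Q φ‖ * C))) := by
            refine Finset.sum_le_sum fun j _ => ?_
            calc ‖((H φ) ^ (k - 1 - j)) ((G φ) _)‖
                ≤ ‖H φ‖ ^ (k - 1 - j) * ‖(G φ) _‖ := pow_apply_norm_le _ _ _
              _ ≤ ‖H φ‖ ^ (k - 1 - j) * (‖G φ‖ * ((1 - ‖H φ‖)⁻¹ * (‖Q φ‖ * C))) := by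
                  refine mul_le_mul_of_nonneg_left ?_ (pow_nonneg (hH0 φ) _)
                  exact ((G φ).le_opNorm _).trans
                    (mul_le_mul_of_nonneg_left (hinner φ j) (norm_nonneg _))
        _ = (∑ j ∈ Finset.range k, ‖H φ‖ ^ (k - 1 - j))
              * (‖G φ‖ * ((1 - ‖H φ‖)⁻¹ * (‖Q φ‖ * C))) := by
            rw [Finset.sum_mul]
        _ ≤ (1 - ‖H φ‖)⁻¹ * (‖G φ‖ * ((1 - ‖H φ‖)⁻¹ * (‖Q φ‖ * C))) := by
            refine mul_le_mul_of_nonneg_right ?_ (mul_nonneg (norm_nonneg _) (mul_nonneg (inv_nonneg.2 (h1H φ).le) (mul_nonneg (norm_nonneg _) hC)))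
            rw [Finset.sum_range_reflect (fun i => ‖H φ‖ ^ i) k]
            rw [← tsum_geometric_of_lt_one (hH0 φ) (hH φ)]
            exact Summable.sum_le_tsum (Finset.range k) (fun i _ => pow_nonneg (hH0 φ) i)
              (summable_geometric_of_lt_one (hH0 φ) (hH φ))
    calc ‖XhatMF H G Q ν X φ k‖ ≤ ‖((H φ) ^ k) (ν φ)‖ + _ := norm_add_le _ _
      _ ≤ ‖ν φ‖ + (1 - ‖H φ‖)⁻¹ * (‖G φ‖ * ((1 - ‖H φ‖)⁻¹ * (‖Q φ‖ * C))) :=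
          add_le_add hpow hsumj
      _ = ‖ν φ‖ + ‖G φ‖ * ‖Q φ‖ * C / (1 - ‖H φ‖) ^ 2 := by
          rw [div_eq_mul_inv, sq, mul_inv]
          ring
  calc ‖TMF H G Q P ν X k‖ ≤ ∑ φ, ‖P φ • XhatMF H G Q ν X φ k‖ := norm_sum_le _ _
    _ ≤ ∑ φ, (‖ν φ‖ + ‖G φ‖ * ‖Q φ‖ * C / (1 - ‖H φ‖) ^ 2) * P φ := by
        refine Finset.sum_le_sum fun φ _ => ?_
        rw [norm_smul, Real.norm_eq_abs, abs_of_nonneg (hP φ)]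
        exact (mul_le_mul_of_nonneg_left (hxhat φ) (hP φ)).trans_eq (mul_comm _ _)
end

section
/- With the data of the mean-field operator setup (finite type set Φ, matrices H(φ), G(φ), Q(φ) with ‖H(φ)‖ < 1 for all φ, probability weights P, initial means ν(φ)), define ζ := ∑_{φ∈Φ} (‖Q(φ)‖ ‖G(φ)‖ / (1 - ‖H(φ)‖)²) P(φ). Then for any two bounded sequences X̄¹, X̄² : ℕ → ℝⁿ, sup_k ‖T(X̄¹)(k) - T(X̄²)(k)‖ ≤ ζ · sup_k ‖X̄¹_k - X̄²_k‖; i.e., T is ζ-Lipschitz in the supremum norm on bounded ℝⁿ-valued sequences. -/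
/-- `‖(B^m) x‖ ≤ ‖B‖^m * ‖x‖` for continuous linear maps. -/
lemma clm_pow_apply_norm_le {n : ℕ}
    (B : EuclideanSpace ℝ (Fin n) →L[ℝ] EuclideanSpace ℝ (Fin n)) (m : ℕ)
    (x : EuclideanSpace ℝ (Fin n)) : ‖(B ^ m) x‖ ≤ ‖B‖ ^ m * ‖x‖ := by
  induction m generalizing x with
  | zero =>
    simp only [pow_zero, ContinuousLinearMap.one_apply, one_mul]
    exact le_refl _
  | succ m ih =>
    rw [pow_succ, ContinuousLinearMap.mul_apply, pow_succ, mul_assoc]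
    exact le_trans (ih (B x)) (mul_le_mul_of_nonneg_left
      (ContinuousLinearMap.le_opNorm _ _) (by positivity))

/-- Summability of the inner series for a bounded sequence. -/
lemma summable_inner_aux {n : ℕ}
    (A Q : EuclideanSpace ℝ (Fin n) →L[ℝ] EuclideanSpace ℝ (Fin n))
    (hA : ‖A‖ < 1) (X : ℕ → EuclideanSpace ℝ (Fin n)) (C : ℝ)
    (hX : ∀ k, ‖X k‖ ≤ C) (j : ℕ) :
    Summable (fun m : ℕ => ((ContinuousLinearMap.adjoint A) ^ m) (Q (X (j + 1 + m)))) := by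
  have hA0 : (0:ℝ) ≤ ‖A‖ := norm_nonneg _
  refine Summable.of_norm_bounded (g := fun m => ‖A‖ ^ m * (‖Q‖ * C)) ?_ ?_
  · exact (summable_geometric_of_lt_one hA0 hA).mul_right _
  · intro m
    calc ‖((ContinuousLinearMap.adjoint A) ^ m) (Q (X (j + 1 + m)))‖
        ≤ ‖ContinuousLinearMap.adjoint A‖ ^ m * ‖Q (X (j + 1 + m))‖ :=
          clm_pow_apply_norm_le _ m _
      _ ≤ ‖ContinuousLinearMap.adjoint A‖ ^ m * (‖Q‖ * ‖X (j + 1 + m)‖) :=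
          mul_le_mul_of_nonneg_left (ContinuousLinearMap.le_opNorm _ _) (by positivity)
      _ ≤ ‖A‖ ^ m * (‖Q‖ * C) := by
          rw [ContinuousLinearMap.adjoint.norm_map A]
          have := hX (j + 1 + m)
          have hQ : (0:ℝ) ≤ ‖Q‖ := norm_nonneg _
          have : ‖Q‖ * ‖X (j + 1 + m)‖ ≤ ‖Q‖ * C := mul_le_mul_of_nonneg_left (hX _) hQ
          exact mul_le_mul_of_nonneg_left this (by positivity)

/-- In the mean-field operator setup, with
`ζ = ∑_φ (‖Q(φ)‖‖G(φ)‖/(1-‖H(φ)‖)²) P(φ)`, for any two bounded sequences `X̄¹, X̄²`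
and any uniform bound `D` on `‖X̄¹_k - X̄²_k‖` (i.e. any upper bound of the sup),
`‖T(X̄¹)(k) - T(X̄²)(k)‖ ≤ ζ D` for every `k`; i.e. `T` is `ζ`-Lipschitz in the
supremum norm on bounded sequences. -/
theorem stmt5 {n : ℕ} {Φ : Type*} [Fintype Φ] [Nonempty Φ]
    (H G Q : Φ → (EuclideanSpace ℝ (Fin n) →L[ℝ] EuclideanSpace ℝ (Fin n)))
    (hH : ∀ φ, ‖H φ‖ < 1)
    (P : Φ → ℝ) (hP : ∀ φ, 0 ≤ P φ) (hPsum : ∑ φ, P φ = 1)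
    (ν : Φ → EuclideanSpace ℝ (Fin n))
    (X1 X2 : ℕ → EuclideanSpace ℝ (Fin n)) (C1 C2 : ℝ)
    (hX1 : ∀ k, ‖X1 k‖ ≤ C1) (hX2 : ∀ k, ‖X2 k‖ ≤ C2)
    (D : ℝ) (hD : ∀ k, ‖X1 k - X2 k‖ ≤ D) :
    ∀ k, ‖TMF H G Q P ν X1 k - TMF H G Q P ν X2 k‖
      ≤ (∑ φ, ‖Q φ‖ * ‖G φ‖ / (1 - ‖H φ‖) ^ 2 * P φ) * D := by
  intro k
  have hD0 : (0:ℝ) ≤ D := le_trans (norm_nonneg _) (hD 0)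
  have key : ∀ φ, ‖XhatMF H G Q ν X1 φ k - XhatMF H G Q ν X2 φ k‖
      ≤ ‖Q φ‖ * ‖G φ‖ / (1 - ‖H φ‖) ^ 2 * D := by
    intro φ
    have hA1 : ‖H φ‖ < 1 := hH φ
    have hA0 : (0:ℝ) ≤ ‖H φ‖ := norm_nonneg _
    have h1pos : (0:ℝ) < 1 - ‖H φ‖ := by linarith
    have hs1 := summable_inner_aux (H φ) (Q φ) hA1 X1 C1 hX1
    have hs2 := summable_inner_aux (H φ) (Q φ) hA1 X2 C2 hX2
    have hsd := summable_inner_aux (H φ) (Q φ) hA1 (fun t => X1 t - X2 t) D hD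
    set c : ℝ := ‖G φ‖ * ((1 - ‖H φ‖)⁻¹ * (‖Q φ‖ * D)) with hc
    have hc0 : 0 ≤ c := by positivity
    have hdiff : XhatMF H G Q ν X1 φ k - XhatMF H G Q ν X2 φ k
        = ∑ j ∈ Finset.range k, ((H φ) ^ (k - 1 - j))
            ((G φ) (∑' m : ℕ, ((ContinuousLinearMap.adjoint (H φ)) ^ m)
              ((Q φ) (X1 (j + 1 + m) - X2 (j + 1 + m))))) := by
      unfold XhatMF
      rw [add_sub_add_left_eq_sub, ← Finset.sum_sub_distrib]
      refine Finset.sum_congr rfl fun j _ => ?_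
      rw [← map_sub, ← map_sub, ← Summable.tsum_sub (hs1 j) (hs2 j)]
      congr 1
      congr 1
      exact tsum_congr fun m => by rw [← map_sub, ← map_sub]
    rw [hdiff]
    have hterm : ∀ j ∈ Finset.range k,
        ‖((H φ) ^ (k - 1 - j)) ((G φ) (∑' m : ℕ,
          ((ContinuousLinearMap.adjoint (H φ)) ^ m)
            ((Q φ) (X1 (j + 1 + m) - X2 (j + 1 + m)))))‖
        ≤ ‖H φ‖ ^ (k - 1 - j) * c := by
      intro j _
      have htsum : ‖∑' m : ℕ, ((ContinuousLinearMap.adjoint (H φ)) ^ m)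
            ((Q φ) (X1 (j + 1 + m) - X2 (j + 1 + m)))‖
          ≤ (1 - ‖H φ‖)⁻¹ * (‖Q φ‖ * D) := by
        have hg : Summable (fun m : ℕ => ‖H φ‖ ^ m * (‖Q φ‖ * D)) :=
          (summable_geometric_of_lt_one hA0 hA1).mul_right _
        have hb : ∀ m : ℕ, ‖((ContinuousLinearMap.adjoint (H φ)) ^ m)
              ((Q φ) (X1 (j + 1 + m) - X2 (j + 1 + m)))‖ ≤ ‖H φ‖ ^ m * (‖Q φ‖ * D) := by
          intro m
          calc ‖((ContinuousLinearMap.adjoint (H φ)) ^ m)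
                ((Q φ) (X1 (j + 1 + m) - X2 (j + 1 + m)))‖
              ≤ ‖ContinuousLinearMap.adjoint (H φ)‖ ^ m
                  * ‖(Q φ) (X1 (j + 1 + m) - X2 (j + 1 + m))‖ :=
                clm_pow_apply_norm_le _ m _
            _ ≤ ‖ContinuousLinearMap.adjoint (H φ)‖ ^ m
                  * (‖Q φ‖ * ‖X1 (j + 1 + m) - X2 (j + 1 + m)‖) :=
                mul_le_mul_of_nonneg_left (ContinuousLinearMap.le_opNorm _ _) (by positivity)
            _ ≤ ‖H φ‖ ^ m * (‖Q φ‖ * D) := by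
                rw [ContinuousLinearMap.adjoint.norm_map (H φ)]
                exact mul_le_mul_of_nonneg_left
                  (mul_le_mul_of_nonneg_left (hD _) (norm_nonneg _)) (by positivity)
        have := tsum_of_norm_bounded hg.hasSum hb
        calc ‖∑' m : ℕ, ((ContinuousLinearMap.adjoint (H φ)) ^ m)
              ((Q φ) (X1 (j + 1 + m) - X2 (j + 1 + m)))‖
            ≤ ∑' m : ℕ, ‖H φ‖ ^ m * (‖Q φ‖ * D) := this
          _ = (∑' m : ℕ, ‖H φ‖ ^ m) * (‖Q φ‖ * D) := tsum_mul_right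
          _ = (1 - ‖H φ‖)⁻¹ * (‖Q φ‖ * D) := by rw [tsum_geometric_of_lt_one hA0 hA1]
      calc ‖((H φ) ^ (k - 1 - j)) ((G φ) (∑' m : ℕ,
              ((ContinuousLinearMap.adjoint (H φ)) ^ m)
                ((Q φ) (X1 (j + 1 + m) - X2 (j + 1 + m)))))‖
          ≤ ‖H φ‖ ^ (k - 1 - j) * ‖(G φ) (∑' m : ℕ,
              ((ContinuousLinearMap.adjoint (H φ)) ^ m)
                ((Q φ) (X1 (j + 1 + m) - X2 (j + 1 + m))))‖ :=
            clm_pow_apply_norm_le _ _ _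
        _ ≤ ‖H φ‖ ^ (k - 1 - j) * (‖G φ‖ * ((1 - ‖H φ‖)⁻¹ * (‖Q φ‖ * D))) := by
            refine mul_le_mul_of_nonneg_left ?_ (by positivity)
            exact le_trans (ContinuousLinearMap.le_opNorm _ _)
              (mul_le_mul_of_nonneg_left htsum (norm_nonneg _))
        _ = ‖H φ‖ ^ (k - 1 - j) * c := rfl
    have hgeom : ∑ j ∈ Finset.range k, ‖H φ‖ ^ j ≤ (1 - ‖H φ‖)⁻¹ := by
      refine le_trans (Summable.sum_le_tsum (Finset.range k) (fun i _ => by positivity)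
        (summable_geometric_of_lt_one hA0 hA1)) ?_
      rw [tsum_geometric_of_lt_one hA0 hA1]
    calc ‖∑ j ∈ Finset.range k, ((H φ) ^ (k - 1 - j)) ((G φ) (∑' m : ℕ,
            ((ContinuousLinearMap.adjoint (H φ)) ^ m)
              ((Q φ) (X1 (j + 1 + m) - X2 (j + 1 + m)))))‖
        ≤ ∑ j ∈ Finset.range k, ‖H φ‖ ^ (k - 1 - j) * c := by
          exact le_trans (norm_sum_le _ _) (Finset.sum_le_sum hterm)
      _ = ∑ j ∈ Finset.range k, ‖H φ‖ ^ j * c :=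
          Finset.sum_range_reflect (fun j => ‖H φ‖ ^ j * c) k
      _ = (∑ j ∈ Finset.range k, ‖H φ‖ ^ j) * c := (Finset.sum_mul _ _ _).symm
      _ ≤ (1 - ‖H φ‖)⁻¹ * c := mul_le_mul_of_nonneg_right hgeom hc0
      _ = ‖Q φ‖ * ‖G φ‖ / (1 - ‖H φ‖) ^ 2 * D := by
          rw [hc, div_eq_mul_inv, sq, mul_inv]
          ring
  have hTdiff : TMF H G Q P ν X1 k - TMF H G Q P ν X2 k
      = ∑ φ, P φ • (XhatMF H G Q ν X1 φ k - XhatMF H G Q ν X2 φ k) := by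
    unfold TMF
    rw [← Finset.sum_sub_distrib]
    exact Finset.sum_congr rfl fun φ _ => (smul_sub _ _ _).symm
  rw [hTdiff]
  calc ‖∑ φ, P φ • (XhatMF H G Q ν X1 φ k - XhatMF H G Q ν X2 φ k)‖
      ≤ ∑ φ, ‖P φ • (XhatMF H G Q ν X1 φ k - XhatMF H G Q ν X2 φ k)‖ :=
        norm_sum_le _ _
    _ ≤ ∑ φ, ‖Q φ‖ * ‖G φ‖ / (1 - ‖H φ‖) ^ 2 * P φ * D := by
        refine Finset.sum_le_sum fun φ _ => ?_
        rw [norm_smul, Real.norm_eq_abs, abs_of_nonneg (hP φ)]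
        calc P φ * ‖XhatMF H G Q ν X1 φ k - XhatMF H G Q ν X2 φ k‖
            ≤ P φ * (‖Q φ‖ * ‖G φ‖ / (1 - ‖H φ‖) ^ 2 * D) :=
              mul_le_mul_of_nonneg_left (key φ) (hP φ)
          _ = ‖Q φ‖ * ‖G φ‖ / (1 - ‖H φ‖) ^ 2 * P φ * D := by ring
    _ = (∑ φ, ‖Q φ‖ * ‖G φ‖ / (1 - ‖H φ‖) ^ 2 * P φ) * D := (Finset.sum_mul _ _ _).symm
end

section
/- With the data of the mean-field operator setup (finite type set Φ, matrices H(φ), G(φ), Q(φ) with ‖H(φ)‖ < 1 for all φ, probability weights P, initial means ν(φ)), suppose ζ := ∑_{φ∈Φ} (‖Q(φ)‖ ‖G(φ)‖ / (1 - ‖H(φ)‖)²) P(φ) < 1. Then there exists a unique bounded sequence X̄* : ℕ → ℝⁿ such that T(X̄*) = X̄*, i.e., X̄*_k = ∑_{φ∈Φ} X̂_k(φ; X̄*) P(φ) for all k ∈ ℕ. -/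
section auxMF

variable {n : ℕ}

private lemma pow_apply_norm_le_MF (A : EuclideanSpace ℝ (Fin n) →L[ℝ] EuclideanSpace ℝ (Fin n))
    (m : ℕ) (x : EuclideanSpace ℝ (Fin n)) : ‖(A ^ m) x‖ ≤ ‖A‖ ^ m * ‖x‖ := by
  induction m generalizing x with
  | zero => rw [pow_zero, pow_zero, one_mul, ContinuousLinearMap.one_apply]
  | succ m ih =>
    rw [pow_succ, pow_succ, ContinuousLinearMap.mul_apply]
    calc ‖(A ^ m) (A x)‖ ≤ ‖A‖ ^ m * ‖A x‖ := ih (A x)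
      _ ≤ ‖A‖ ^ m * (‖A‖ * ‖x‖) := by
          exact mul_le_mul_of_nonneg_left (A.le_opNorm x) (pow_nonneg (norm_nonneg A) m)
      _ = ‖A‖ ^ m * ‖A‖ * ‖x‖ := by ring

private lemma aux_summable_MF (A Q : EuclideanSpace ℝ (Fin n) →L[ℝ] EuclideanSpace ℝ (Fin n))
    (hA : ‖A‖ < 1) {X : ℕ → EuclideanSpace ℝ (Fin n)} {C : ℝ} (hX : ∀ k, ‖X k‖ ≤ C) (j : ℕ) :
    Summable fun m : ℕ => ((ContinuousLinearMap.adjoint A) ^ m) (Q (X (j + 1 + m))) := by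
  have hC : 0 ≤ C := (norm_nonneg _).trans (hX 0)
  apply Summable.of_norm
  refine Summable.of_nonneg_of_le (fun m => norm_nonneg _) (fun m => ?_)
    ((summable_geometric_of_lt_one (norm_nonneg A) hA).mul_right (‖Q‖ * C))
  calc ‖((ContinuousLinearMap.adjoint A) ^ m) (Q (X (j + 1 + m)))‖
      ≤ ‖ContinuousLinearMap.adjoint A‖ ^ m * ‖Q (X (j + 1 + m))‖ :=
        pow_apply_norm_le_MF _ m _
    _ ≤ ‖A‖ ^ m * (‖Q‖ * C) := by
        rw [ContinuousLinearMap.adjoint.norm_map A]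
        refine mul_le_mul_of_nonneg_left ?_ (pow_nonneg (norm_nonneg A) m)
        calc ‖Q (X (j + 1 + m))‖ ≤ ‖Q‖ * ‖X (j + 1 + m)‖ := Q.le_opNorm _
          _ ≤ ‖Q‖ * C := mul_le_mul_of_nonneg_left (hX _) (norm_nonneg Q)

private lemma aux_tsum_norm_MF (A Q : EuclideanSpace ℝ (Fin n) →L[ℝ] EuclideanSpace ℝ (Fin n))
    (hA : ‖A‖ < 1) {X : ℕ → EuclideanSpace ℝ (Fin n)} {C : ℝ} (hX : ∀ k, ‖X k‖ ≤ C) (j : ℕ) :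
    ‖∑' m : ℕ, ((ContinuousLinearMap.adjoint A) ^ m) (Q (X (j + 1 + m)))‖
      ≤ ‖Q‖ * C * (1 - ‖A‖)⁻¹ := by
  have hC : 0 ≤ C := (norm_nonneg _).trans (hX 0)
  have h := tsum_of_norm_bounded
    ((hasSum_geometric_of_lt_one (norm_nonneg A) hA).mul_right (‖Q‖ * C))
    (f := fun m : ℕ => ((ContinuousLinearMap.adjoint A) ^ m) (Q (X (j + 1 + m))))
    (fun m => by
      calc ‖((ContinuousLinearMap.adjoint A) ^ m) (Q (X (j + 1 + m)))‖
          ≤ ‖ContinuousLinearMap.adjoint A‖ ^ m * ‖Q (X (j + 1 + m))‖ :=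
            pow_apply_norm_le_MF _ m _
        _ ≤ ‖A‖ ^ m * (‖Q‖ * C) := by
            rw [ContinuousLinearMap.adjoint.norm_map A]
            refine mul_le_mul_of_nonneg_left ?_ (pow_nonneg (norm_nonneg A) m)
            calc ‖Q (X (j + 1 + m))‖ ≤ ‖Q‖ * ‖X (j + 1 + m)‖ := Q.le_opNorm _
              _ ≤ ‖Q‖ * C := mul_le_mul_of_nonneg_left (hX _) (norm_nonneg Q))
  calc ‖∑' m : ℕ, ((ContinuousLinearMap.adjoint A) ^ m) (Q (X (j + 1 + m)))‖
      ≤ (1 - ‖A‖)⁻¹ * (‖Q‖ * C) := h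
    _ = ‖Q‖ * C * (1 - ‖A‖)⁻¹ := by ring

private lemma xhat_diff_MF {Φ : Type*}
    (H G Q : Φ → (EuclideanSpace ℝ (Fin n) →L[ℝ] EuclideanSpace ℝ (Fin n)))
    (ν : Φ → EuclideanSpace ℝ (Fin n)) (φ : Φ) (hH : ‖H φ‖ < 1)
    {X Y : ℕ → EuclideanSpace ℝ (Fin n)} {CX CY D : ℝ}
    (hX : ∀ k, ‖X k‖ ≤ CX) (hY : ∀ k, ‖Y k‖ ≤ CY)
    (hD : ∀ k, ‖X k - Y k‖ ≤ D) (k : ℕ) :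
    ‖XhatMF H G Q ν X φ k - XhatMF H G Q ν Y φ k‖
      ≤ ‖Q φ‖ * ‖G φ‖ / (1 - ‖H φ‖) ^ 2 * D := by
  have hr0 : (0:ℝ) ≤ ‖H φ‖ := norm_nonneg _
  have hr1 : (0:ℝ) < 1 - ‖H φ‖ := by linarith
  have hD0 : 0 ≤ D := (norm_nonneg _).trans (hD 0)
  have hdiff : XhatMF H G Q ν X φ k - XhatMF H G Q ν Y φ k
      = ∑ j ∈ Finset.range k, ((H φ) ^ (k - 1 - j))
          ((G φ) (∑' m : ℕ, ((ContinuousLinearMap.adjoint (H φ)) ^ m)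
            ((Q φ) (X (j + 1 + m) - Y (j + 1 + m))))) := by
    unfold XhatMF
    rw [add_sub_add_left_eq_sub, ← Finset.sum_sub_distrib]
    refine Finset.sum_congr rfl fun j _ => ?_
    rw [← map_sub, ← map_sub]
    congr 1
    congr 1
    rw [← Summable.tsum_sub (aux_summable_MF (H φ) (Q φ) hH hX j)
      (aux_summable_MF (H φ) (Q φ) hH hY j)]
    exact tsum_congr fun m => by rw [← map_sub, ← map_sub]
  rw [hdiff]
  have hterm : ∀ j ∈ Finset.range k,
      ‖((H φ) ^ (k - 1 - j)) ((G φ) (∑' m : ℕ, ((ContinuousLinearMap.adjoint (H φ)) ^ m)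
        ((Q φ) (X (j + 1 + m) - Y (j + 1 + m)))))‖
      ≤ ‖H φ‖ ^ (k - 1 - j) * (‖G φ‖ * (‖Q φ‖ * D * (1 - ‖H φ‖)⁻¹)) := by
    intro j _
    calc ‖((H φ) ^ (k - 1 - j)) ((G φ) _)‖
        ≤ ‖H φ‖ ^ (k - 1 - j) * ‖(G φ) _‖ := pow_apply_norm_le_MF _ _ _
      _ ≤ ‖H φ‖ ^ (k - 1 - j) * (‖G φ‖ * (‖Q φ‖ * D * (1 - ‖H φ‖)⁻¹)) := by
          refine mul_le_mul_of_nonneg_left ?_ (pow_nonneg hr0 _)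
          calc ‖(G φ) _‖ ≤ ‖G φ‖ * ‖_‖ := (G φ).le_opNorm _
            _ ≤ ‖G φ‖ * (‖Q φ‖ * D * (1 - ‖H φ‖)⁻¹) := by
                exact mul_le_mul_of_nonneg_left
                  (aux_tsum_norm_MF (H φ) (Q φ) hH (X := fun k => X k - Y k) hD j)
                  (norm_nonneg _)
  calc ‖∑ j ∈ Finset.range k, _‖
      ≤ ∑ j ∈ Finset.range k,
          ‖((H φ) ^ (k - 1 - j)) ((G φ) (∑' m : ℕ, ((ContinuousLinearMap.adjoint (H φ)) ^ m)
            ((Q φ) (X (j + 1 + m) - Y (j + 1 + m)))))‖ := norm_sum_le _ _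
    _ ≤ ∑ j ∈ Finset.range k,
          ‖H φ‖ ^ (k - 1 - j) * (‖G φ‖ * (‖Q φ‖ * D * (1 - ‖H φ‖)⁻¹)) :=
        Finset.sum_le_sum hterm
    _ = (∑ j ∈ Finset.range k, ‖H φ‖ ^ j) * (‖G φ‖ * (‖Q φ‖ * D * (1 - ‖H φ‖)⁻¹)) := by
        rw [← Finset.sum_mul, Finset.sum_range_reflect (fun j => ‖H φ‖ ^ j) k]
    _ ≤ (1 - ‖H φ‖)⁻¹ * (‖G φ‖ * (‖Q φ‖ * D * (1 - ‖H φ‖)⁻¹)) := by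
        refine mul_le_mul_of_nonneg_right ?_ ?_
        · calc (∑ j ∈ Finset.range k, ‖H φ‖ ^ j) ≤ ∑' j : ℕ, ‖H φ‖ ^ j :=
              Summable.sum_le_tsum _ (fun j _ => pow_nonneg hr0 j)
                (summable_geometric_of_lt_one hr0 hH)
            _ = (1 - ‖H φ‖)⁻¹ := tsum_geometric_of_lt_one hr0 hH
        · positivity
    _ = ‖Q φ‖ * ‖G φ‖ / (1 - ‖H φ‖) ^ 2 * D := by
        rw [div_eq_mul_inv, sq, mul_inv]
        ring

private lemma xhat_zero_MF {Φ : Type*}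
    (H G Q : Φ → (EuclideanSpace ℝ (Fin n) →L[ℝ] EuclideanSpace ℝ (Fin n)))
    (ν : Φ → EuclideanSpace ℝ (Fin n)) (φ : Φ) (k : ℕ) :
    XhatMF H G Q ν (fun _ => 0) φ k = ((H φ) ^ k) (ν φ) := by
  unfold XhatMF
  rw [add_eq_left]
  refine Finset.sum_eq_zero fun j _ => ?_
  simp only [map_zero, tsum_zero]

private lemma xhat_bound_MF {Φ : Type*}
    (H G Q : Φ → (EuclideanSpace ℝ (Fin n) →L[ℝ] EuclideanSpace ℝ (Fin n)))
    (ν : Φ → EuclideanSpace ℝ (Fin n)) (φ : Φ) (hH : ‖H φ‖ < 1)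
    {X : ℕ → EuclideanSpace ℝ (Fin n)} {C : ℝ} (hX : ∀ k, ‖X k‖ ≤ C) (k : ℕ) :
    ‖XhatMF H G Q ν X φ k‖ ≤ ‖ν φ‖ + ‖Q φ‖ * ‖G φ‖ / (1 - ‖H φ‖) ^ 2 * C := by
  have h1 : ‖XhatMF H G Q ν X φ k - XhatMF H G Q ν (fun _ => 0) φ k‖
      ≤ ‖Q φ‖ * ‖G φ‖ / (1 - ‖H φ‖) ^ 2 * C :=
    xhat_diff_MF H G Q ν φ hH (CY := 0) hX (fun _ => by simp) (fun k => by simpa using hX k) k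
  have h2 : ‖XhatMF H G Q ν (fun _ => 0) φ k‖ ≤ ‖ν φ‖ := by
    rw [xhat_zero_MF]
    calc ‖((H φ) ^ k) (ν φ)‖ ≤ ‖H φ‖ ^ k * ‖ν φ‖ := pow_apply_norm_le_MF _ _ _
      _ ≤ 1 * ‖ν φ‖ := by
          exact mul_le_mul_of_nonneg_right
            (pow_le_one₀ (norm_nonneg _) hH.le) (norm_nonneg _)
      _ = ‖ν φ‖ := one_mul _
  calc ‖XhatMF H G Q ν X φ k‖
      = ‖(XhatMF H G Q ν X φ k - XhatMF H G Q ν (fun _ => 0) φ k)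
          + XhatMF H G Q ν (fun _ => 0) φ k‖ := by rw [sub_add_cancel]
    _ ≤ ‖XhatMF H G Q ν X φ k - XhatMF H G Q ν (fun _ => 0) φ k‖
          + ‖XhatMF H G Q ν (fun _ => 0) φ k‖ := norm_add_le _ _
    _ ≤ ‖Q φ‖ * ‖G φ‖ / (1 - ‖H φ‖) ^ 2 * C + ‖ν φ‖ := add_le_add h1 h2
    _ = ‖ν φ‖ + ‖Q φ‖ * ‖G φ‖ / (1 - ‖H φ‖) ^ 2 * C := by ring

end auxMF

/-- In the mean-field operator setup, if
`ζ = ∑_φ (‖Q(φ)‖‖G(φ)‖/(1-‖H(φ)‖)²) P(φ) < 1`, then there is a unique bounded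
sequence `X̄* : ℕ → ℝⁿ` with `T(X̄*) = X̄*`, i.e. `X̄*_k = ∑_φ X̂_k(φ; X̄*) P(φ)`
for all `k`. -/
theorem stmt6 {n : ℕ} {Φ : Type*} [Fintype Φ] [Nonempty Φ]
    (H G Q : Φ → (EuclideanSpace ℝ (Fin n) →L[ℝ] EuclideanSpace ℝ (Fin n)))
    (hH : ∀ φ, ‖H φ‖ < 1)
    (P : Φ → ℝ) (hP : ∀ φ, 0 ≤ P φ) (hPsum : ∑ φ, P φ = 1)
    (ν : Φ → EuclideanSpace ℝ (Fin n))
    (hζ : ∑ φ, ‖Q φ‖ * ‖G φ‖ / (1 - ‖H φ‖) ^ 2 * P φ < 1) :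
    ∃! X : ℕ → EuclideanSpace ℝ (Fin n),
      (∃ C : ℝ, ∀ k, ‖X k‖ ≤ C) ∧ ∀ k, TMF H G Q P ν X k = X k := by
  classical
  set ζ : ℝ := ∑ φ, ‖Q φ‖ * ‖G φ‖ / (1 - ‖H φ‖) ^ 2 * P φ with hζdef
  have hζφ : ∀ φ : Φ, 0 ≤ ‖Q φ‖ * ‖G φ‖ / (1 - ‖H φ‖) ^ 2 := fun φ =>
    div_nonneg (mul_nonneg (norm_nonneg _) (norm_nonneg _)) (sq_nonneg _)
  have hζ0 : 0 ≤ ζ := Finset.sum_nonneg fun φ _ => mul_nonneg (hζφ φ) (hP φ)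
  -- boundedness of TMF
  have hTbd : ∀ f : BoundedContinuousFunction ℕ (EuclideanSpace ℝ (Fin n)), ∀ k : ℕ,
      ‖TMF H G Q P ν (⇑f) k‖
        ≤ ∑ φ, P φ * (‖ν φ‖ + ‖Q φ‖ * ‖G φ‖ / (1 - ‖H φ‖) ^ 2 * ‖f‖) := by
    intro f k
    calc ‖TMF H G Q P ν (⇑f) k‖
        ≤ ∑ φ, ‖P φ • XhatMF H G Q ν (⇑f) φ k‖ := norm_sum_le _ _
      _ ≤ ∑ φ, P φ * (‖ν φ‖ + ‖Q φ‖ * ‖G φ‖ / (1 - ‖H φ‖) ^ 2 * ‖f‖) := by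
          refine Finset.sum_le_sum fun φ _ => ?_
          rw [norm_smul, Real.norm_of_nonneg (hP φ)]
          exact mul_le_mul_of_nonneg_left
            (xhat_bound_MF H G Q ν φ (hH φ) (fun k => f.norm_coe_le_norm k) k) (hP φ)
  let T' : (BoundedContinuousFunction ℕ (EuclideanSpace ℝ (Fin n))) → (BoundedContinuousFunction ℕ (EuclideanSpace ℝ (Fin n))) := fun f =>
    BoundedContinuousFunction.ofNormedAddCommGroup (TMF H G Q P ν (⇑f))
      continuous_of_discreteTopology _ (hTbd f)
  have hT'app : ∀ f : BoundedContinuousFunction ℕ (EuclideanSpace ℝ (Fin n)), ∀ k : ℕ,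
      T' f k = TMF H G Q P ν (⇑f) k := fun f k => rfl
  -- contraction estimate
  have key : ∀ f g : BoundedContinuousFunction ℕ (EuclideanSpace ℝ (Fin n)), ∀ k : ℕ,
      ‖TMF H G Q P ν (⇑f) k - TMF H G Q P ν (⇑g) k‖ ≤ ζ * dist f g := by
    intro f g k
    have hfg : ∀ k : ℕ, ‖f k - g k‖ ≤ dist f g := fun k => by
      rw [← dist_eq_norm]; exact BoundedContinuousFunction.dist_coe_le_dist k
    have hdiff : TMF H G Q P ν (⇑f) k - TMF H G Q P ν (⇑g) k
        = ∑ φ, P φ • (XhatMF H G Q ν (⇑f) φ k - XhatMF H G Q ν (⇑g) φ k) := by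
      unfold TMF
      rw [← Finset.sum_sub_distrib]
      exact Finset.sum_congr rfl fun φ _ => (smul_sub _ _ _).symm
    rw [hdiff]
    calc ‖∑ φ, P φ • (XhatMF H G Q ν (⇑f) φ k - XhatMF H G Q ν (⇑g) φ k)‖
        ≤ ∑ φ, ‖P φ • (XhatMF H G Q ν (⇑f) φ k - XhatMF H G Q ν (⇑g) φ k)‖ :=
          norm_sum_le _ _
      _ ≤ ∑ φ, P φ * (‖Q φ‖ * ‖G φ‖ / (1 - ‖H φ‖) ^ 2 * dist f g) := by
          refine Finset.sum_le_sum fun φ _ => ?_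
          rw [norm_smul, Real.norm_of_nonneg (hP φ)]
          exact mul_le_mul_of_nonneg_left
            (xhat_diff_MF H G Q ν φ (hH φ) (fun k => f.norm_coe_le_norm k)
              (fun k => g.norm_coe_le_norm k) hfg k) (hP φ)
      _ = ζ * dist f g := by
          rw [hζdef, Finset.sum_mul]
          exact Finset.sum_congr rfl fun φ _ => by ring
  have hLip : LipschitzWith ⟨ζ, hζ0⟩ T' := by
    refine LipschitzWith.of_dist_le_mul fun f g => ?_
    refine (BoundedContinuousFunction.dist_le (mul_nonneg hζ0 dist_nonneg)).2 fun k => ?_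
    rw [dist_eq_norm, hT'app, hT'app]
    exact key f g k
  have hContr : ContractingWith ⟨ζ, hζ0⟩ T' := by
    refine ⟨?_, hLip⟩
    exact_mod_cast hζ
  refine ⟨⇑(ContractingWith.fixedPoint T' hContr),
    ⟨⟨‖ContractingWith.fixedPoint T' hContr‖,
      fun k => (ContractingWith.fixedPoint T' hContr).norm_coe_le_norm k⟩, fun k => ?_⟩, ?_⟩
  · have hfix := hContr.fixedPoint_isFixedPt
    calc TMF H G Q P ν (⇑(ContractingWith.fixedPoint T' hContr)) k
        = T' (ContractingWith.fixedPoint T' hContr) k := rfl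
      _ = (ContractingWith.fixedPoint T' hContr) k := by rw [hfix]
  · rintro Y ⟨⟨C, hC⟩, hfixY⟩
    let g : BoundedContinuousFunction ℕ (EuclideanSpace ℝ (Fin n)) :=
      BoundedContinuousFunction.ofNormedAddCommGroup Y continuous_of_discreteTopology C hC
    have hg : Function.IsFixedPt T' g := by
      apply BoundedContinuousFunction.ext
      intro k
      calc T' g k = TMF H G Q P ν Y k := rfl
        _ = Y k := hfixY k
        _ = g k := rfl
    have := hContr.fixedPoint_unique hg
    funext k
    calc Y k = g k := rfl
      _ = (ContractingWith.fixedPoint T' hContr) k := by rw [this]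
end

section
/- Let T ≥ 1 be an integer, let Q be a real symmetric positive semidefinite n×n matrix, and let x, m, x̄ : {0, …, T-1} → ℝⁿ be finite sequences. Define ε := (1/T) ∑_{k=0}^{T-1} ‖x̄_k - m_k‖² and D := (1/T) ∑_{k=0}^{T-1} ‖x_k - x̄_k‖². Then (1/T) ∑_{k=0}^{T-1} (x_k - m_k)ᵀ Q (x_k - m_k) - (1/T) ∑_{k=0}^{T-1} (x_k - x̄_k)ᵀ Q (x_k - x̄_k) ≤ ‖Q‖ ε + 2 ‖Q‖ √(ε · D). -/
open scoped RealInnerProductSpace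

/-- Let `T ≥ 1`, let `Q` be a real symmetric positive semidefinite
n×n matrix (modeled as a self-adjoint continuous linear map on Euclidean space, with
`vᵀQv = ⟪Q v, v⟫`), and let `x, m, x̄ : {0,…,T-1} → ℝⁿ`. With
`ε = (1/T) ∑_k ‖x̄_k - m_k‖²` and `D = (1/T) ∑_k ‖x_k - x̄_k‖²`, one has
`(1/T) ∑_k (x_k-m_k)ᵀQ(x_k-m_k) - (1/T) ∑_k (x_k-x̄_k)ᵀQ(x_k-x̄_k)
  ≤ ‖Q‖ ε + 2‖Q‖ √(ε D)`. -/
theorem stmt14 {n : ℕ} (T : ℕ) (hT : 1 ≤ T)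
    (Q : EuclideanSpace ℝ (Fin n) →L[ℝ] EuclideanSpace ℝ (Fin n))
    (hQsym : ∀ v w : EuclideanSpace ℝ (Fin n), ⟪Q v, w⟫ = ⟪v, Q w⟫)
    (hQpsd : ∀ v : EuclideanSpace ℝ (Fin n), 0 ≤ ⟪Q v, v⟫)
    (x m xbar : ℕ → EuclideanSpace ℝ (Fin n))
    (ε D : ℝ)
    (hε : ε = (1 / (T : ℝ)) * ∑ k ∈ Finset.range T, ‖xbar k - m k‖ ^ 2)
    (hD : D = (1 / (T : ℝ)) * ∑ k ∈ Finset.range T, ‖x k - xbar k‖ ^ 2) :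
    (1 / (T : ℝ)) * ∑ k ∈ Finset.range T, ⟪Q (x k - m k), x k - m k⟫
      - (1 / (T : ℝ)) * ∑ k ∈ Finset.range T, ⟪Q (x k - xbar k), x k - xbar k⟫
      ≤ ‖Q‖ * ε + 2 * ‖Q‖ * Real.sqrt (ε * D) := by
  have hT0 : (0:ℝ) < T := by exact_mod_cast hT
  set a : ℕ → EuclideanSpace ℝ (Fin n) := fun k => x k - xbar k with ha
  set b : ℕ → EuclideanSpace ℝ (Fin n) := fun k => xbar k - m k with hb
  have hQ0 : (0:ℝ) ≤ ‖Q‖ := norm_nonneg _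
  have key : ∀ k, ⟪Q (x k - m k), x k - m k⟫ - ⟪Q (a k), a k⟫
      ≤ ‖Q‖ * ‖b k‖^2 + 2 * (‖Q‖ * (‖a k‖ * ‖b k‖)) := by
    intro k
    have hk : x k - m k = a k + b k := by simp only [ha, hb]; abel
    rw [hk]
    have expand : ⟪Q (a k + b k), a k + b k⟫ =
        ⟪Q (a k), a k⟫ + 2 * ⟪Q (a k), b k⟫ + ⟪Q (b k), b k⟫ := by
      have h : ⟪Q (b k), a k⟫ = ⟪Q (a k), b k⟫ := by
        rw [hQsym]; exact real_inner_comm _ _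
      simp only [map_add, inner_add_left, inner_add_right]
      linarith [h]
    rw [expand]
    have h1 : ⟪Q (a k), b k⟫ ≤ ‖Q‖ * (‖a k‖ * ‖b k‖) := by
      calc ⟪Q (a k), b k⟫ ≤ ‖Q (a k)‖ * ‖b k‖ := real_inner_le_norm _ _
        _ ≤ ‖Q‖ * ‖a k‖ * ‖b k‖ := by gcongr; exact Q.le_opNorm _
        _ = _ := by ring
    have h2 : ⟪Q (b k), b k⟫ ≤ ‖Q‖ * ‖b k‖^2 := by
      calc ⟪Q (b k), b k⟫ ≤ ‖Q (b k)‖ * ‖b k‖ := real_inner_le_norm _ _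
        _ ≤ ‖Q‖ * ‖b k‖ * ‖b k‖ := by gcongr; exact Q.le_opNorm _
        _ = ‖Q‖ * ‖b k‖^2 := by ring
    linarith
  have hsum : ∑ k ∈ Finset.range T, ⟪Q (x k - m k), x k - m k⟫
      - ∑ k ∈ Finset.range T, ⟪Q (a k), a k⟫
      ≤ ‖Q‖ * (∑ k ∈ Finset.range T, ‖b k‖^2)
        + 2 * ‖Q‖ * ∑ k ∈ Finset.range T, ‖a k‖ * ‖b k‖ := by
    rw [← Finset.sum_sub_distrib]
    calc _ ≤ ∑ k ∈ Finset.range T, (‖Q‖ * ‖b k‖^2 + 2 * (‖Q‖ * (‖a k‖ * ‖b k‖))) :=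
          Finset.sum_le_sum fun k _ => key k
      _ = _ := by simp_rw [Finset.sum_add_distrib, ← Finset.mul_sum, mul_assoc]
  have hcs : ∑ k ∈ Finset.range T, ‖a k‖ * ‖b k‖
      ≤ Real.sqrt (∑ k ∈ Finset.range T, ‖a k‖^2) * Real.sqrt (∑ k ∈ Finset.range T, ‖b k‖^2) :=
    Real.sum_mul_le_sqrt_mul_sqrt _ _ _
  have hSa : (0:ℝ) ≤ ∑ k ∈ Finset.range T, ‖a k‖^2 := by positivity
  have hSb : (0:ℝ) ≤ ∑ k ∈ Finset.range T, ‖b k‖^2 := by positivity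
  have hsqrt : Real.sqrt (ε * D)
      = (1 / (T:ℝ)) * (Real.sqrt (∑ k ∈ Finset.range T, ‖a k‖^2)
          * Real.sqrt (∑ k ∈ Finset.range T, ‖b k‖^2)) := by
    rw [hε, hD]
    rw [show (1 / (T : ℝ)) * (∑ k ∈ Finset.range T, ‖xbar k - m k‖ ^ 2)
        * ((1 / (T : ℝ)) * ∑ k ∈ Finset.range T, ‖x k - xbar k‖ ^ 2)
      = ((1/(T:ℝ))^2) * ((∑ k ∈ Finset.range T, ‖a k‖ ^ 2)
        * (∑ k ∈ Finset.range T, ‖b k‖ ^ 2)) from by simp only [ha, hb]; ring]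
    rw [Real.sqrt_mul (sq_nonneg _), Real.sqrt_mul hSa,
      Real.sqrt_sq (le_of_lt (by positivity : (0:ℝ) < 1/(T:ℝ)))]
  rw [hsqrt, hε]
  have expand2 : ‖Q‖ * ((1 / (T:ℝ)) * ∑ k ∈ Finset.range T, ‖xbar k - m k‖ ^ 2)
      = (1/(T:ℝ)) * (‖Q‖ * ∑ k ∈ Finset.range T, ‖b k‖^2) := by simp only [hb]; ring
  rw [expand2]
  have h2Q : (0:ℝ) ≤ 2 * ‖Q‖ := by positivity
  calc (1 / (T : ℝ)) * ∑ k ∈ Finset.range T, ⟪Q (x k - m k), x k - m k⟫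
      - (1 / (T : ℝ)) * ∑ k ∈ Finset.range T, ⟪Q (x k - xbar k), x k - xbar k⟫
      = (1/(T:ℝ)) * (∑ k ∈ Finset.range T, ⟪Q (x k - m k), x k - m k⟫
          - ∑ k ∈ Finset.range T, ⟪Q (a k), a k⟫) := by simp [ha]; ring
    _ ≤ (1/(T:ℝ)) * (‖Q‖ * (∑ k ∈ Finset.range T, ‖b k‖^2)
          + 2 * ‖Q‖ * ∑ k ∈ Finset.range T, ‖a k‖ * ‖b k‖) := by
        apply mul_le_mul_of_nonneg_left hsum (by positivity)
    _ = (1/(T:ℝ)) * (‖Q‖ * ∑ k ∈ Finset.range T, ‖b k‖^2)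
        + 2 * ‖Q‖ * ((1 / (T:ℝ)) * ∑ k ∈ Finset.range T, ‖a k‖ * ‖b k‖) := by ring
    _ ≤ (1/(T:ℝ)) * (‖Q‖ * ∑ k ∈ Finset.range T, ‖b k‖^2)
        + 2 * ‖Q‖ * ((1 / (T:ℝ)) * (Real.sqrt (∑ k ∈ Finset.range T, ‖a k‖^2)
          * Real.sqrt (∑ k ∈ Finset.range T, ‖b k‖^2))) := by
        have := mul_le_mul_of_nonneg_left
          (mul_le_mul_of_nonneg_left hcs (le_of_lt (by positivity : (0:ℝ) < 1/(T:ℝ)))) h2Q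
        linarith
end
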